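/- Let v, f be integers with 0 ≤ f ≤ v-1 and v-f even. Under the action of the cyclic group generated by A_{v,f} on GF(2)^v, the number of fixed planes of type 7 equals the Gaussian binomial coefficient [f choose 3]_2 = (2^f-1)(2^{f-1}-1)(2^{f-2}-1)/21, and the number of fixed planes of type 1 equals (2^f-1)(2^{v-f}-1)/3, which is also the number of orbit triangles. -/

import Mathlib

/-- The action of a matrix `A` on subspaces of `GF(2)^v`, induced by the
right action `x ↦ x ⬝ A` on vectors. -/
def mapMat {v : ℕ} (A : Matrix (Fin v) (Fin v) (ZMod 2))
    (W : Submodule (ZMod 2) (Fin v → ZMod 2)) : Submodule (ZMod 2) (Fin v → ZMod 2) :=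
  W.map A.vecMulLinear

/-- The block-diagonal matrix `A_{v,f}` over `GF(2)`: `(v-f)/2` consecutive 2×2 blocks
`[[0,1],[1,1]]` on the diagonal, followed by the `f×f` identity matrix. -/
def Avf (v f : ℕ) : Matrix (Fin v) (Fin v) (ZMod 2) :=
  Matrix.of fun i j =>
    if (i : ℕ) < v - f then
      if (i : ℕ) % 2 = 0 then (if (j : ℕ) = (i : ℕ) + 1 then 1 else 0)
      else (if (j : ℕ) = (i : ℕ) - 1 ∨ (j : ℕ) = (i : ℕ) then 1 else 0)
    else (if j = i then 1 else 0)

/-- `E` is a fixed plane of `A`: a 3-dimensional subspace with `E⬝A = E`. -/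
def IsFixedPlane {v : ℕ} (A : Matrix (Fin v) (Fin v) (ZMod 2))
    (E : Submodule (ZMod 2) (Fin v → ZMod 2)) : Prop :=
  Module.finrank (ZMod 2) E = 3 ∧ mapMat A E = E

/-- A subspace is pointwise fixed by `A` (for a plane: "of type 7") if every
1-dimensional subspace of it is fixed by `A`. -/
def PointwiseFixed {v : ℕ} (A : Matrix (Fin v) (Fin v) (ZMod 2))
    (E : Submodule (ZMod 2) (Fin v → ZMod 2)) : Prop :=
  ∀ P : Submodule (ZMod 2) (Fin v → ZMod 2),
    Module.finrank (ZMod 2) P = 1 → P ≤ E → mapMat A P = P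

/-- An orbit triangle: an orbit of size 3 of `⟨A_{v,f}⟩` on points whose three points
do not lie in a common 2-dimensional subspace. -/
def IsOrbitTriangle (v f : ℕ) (O : Set (Submodule (ZMod 2) (Fin v → ZMod 2))) : Prop :=
  (∃ P : Submodule (ZMod 2) (Fin v → ZMod 2), Module.finrank (ZMod 2) P = 1 ∧
    O = {P, mapMat (Avf v f) P, mapMat (Avf v f) (mapMat (Avf v f) P)} ∧ O.ncard = 3) ∧
  ¬ ∃ L : Submodule (ZMod 2) (Fin v → ZMod 2),
      Module.finrank (ZMod 2) L = 2 ∧ ∀ P ∈ O, P ≤ L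


set_option linter.unusedSectionVars false

noncomputable def phi (v f : ℕ) : (Fin v → ZMod 2) →ₗ[ZMod 2] (Fin v → ZMod 2) :=
  (Avf v f).vecMulLinear

section
variable {v f : ℕ}

lemma phi_apply (x : Fin v → ZMod 2) (j : Fin v) :
    phi v f x j = ∑ i, x i * Avf v f i j := by
  simp [phi, Matrix.vecMulLinear_apply, Matrix.vecMul, dotProduct]

lemma phi_apply_even (hvf : Even (v - f)) (x : Fin v → ZMod 2) (j : Fin v)
    (hj : (j : ℕ) < v - f) (he : (j : ℕ) % 2 = 0) (hj1 : (j : ℕ) + 1 < v) :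
    phi v f x j = x ⟨(j : ℕ) + 1, hj1⟩ := by
  obtain ⟨m, hm⟩ := hvf
  rw [phi_apply]
  rw [Finset.sum_eq_single (⟨(j : ℕ) + 1, hj1⟩ : Fin v)]
  · set a : Fin v := ⟨(j : ℕ) + 1, hj1⟩ with ha
    have hav : (a : ℕ) = (j : ℕ) + 1 := rfl
    have : Avf v f a j = 1 := by
      simp only [Avf, Matrix.of_apply]
      rw [if_pos (by omega), if_neg (by omega), if_pos (by omega)]
    rw [this, mul_one]
  · intro b _ hb
    have hb' : (b : ℕ) ≠ (j : ℕ) + 1 := fun h => hb (Fin.ext h)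
    have : Avf v f b j = 0 := by
      simp only [Avf, Matrix.of_apply]
      by_cases h1 : (b : ℕ) < v - f
      · rw [if_pos h1]
        by_cases h2 : (b : ℕ) % 2 = 0
        · rw [if_pos h2, if_neg (by omega)]
        · rw [if_neg h2, if_neg (by omega)]
      · rw [if_neg h1, if_neg (fun h : j = b => absurd (congrArg Fin.val h) (by omega))]
    rw [this, mul_zero]
  · intro h; exact absurd (Finset.mem_univ _) h

lemma phi_apply_odd (x : Fin v → ZMod 2) (j : Fin v) (hj : (j : ℕ) < v - f)
    (ho : (j : ℕ) % 2 = 1) (hj1 : (j : ℕ) - 1 < v) :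
    phi v f x j = x ⟨(j : ℕ) - 1, hj1⟩ + x j := by
  rw [phi_apply]
  set a : Fin v := ⟨(j : ℕ) - 1, hj1⟩ with ha
  have hav : (a : ℕ) = (j : ℕ) - 1 := rfl
  have hne : a ≠ j := by
    intro h; have := congrArg Fin.val h; omega
  have key : ∑ i ∈ ({a, j} : Finset (Fin v)), x i * Avf v f i j
      = ∑ i, x i * Avf v f i j := by
    apply Finset.sum_subset (Finset.subset_univ _)
    intro b _ hb
    simp only [Finset.mem_insert, Finset.mem_singleton, not_or] at hb
    obtain ⟨hb1, hb2⟩ := hb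
    have hb1' : (b : ℕ) ≠ (j : ℕ) - 1 := fun h => hb1 (Fin.ext (by omega))
    have hb2' : (b : ℕ) ≠ (j : ℕ) := fun h => hb2 (Fin.ext h)
    have : Avf v f b j = 0 := by
      simp only [Avf, Matrix.of_apply]
      by_cases h1 : (b : ℕ) < v - f
      · rw [if_pos h1]
        by_cases h2 : (b : ℕ) % 2 = 0
        · rw [if_pos h2, if_neg (by omega)]
        · rw [if_neg h2, if_neg (by omega)]
      · rw [if_neg h1, if_neg (fun h : j = b => absurd (congrArg Fin.val h) (by omega))]
    rw [this, mul_zero]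
  rw [← key, Finset.sum_pair hne]
  have hA1 : Avf v f a j = 1 := by
    simp only [Avf, Matrix.of_apply]
    have c1 : ((a : ℕ) < v - f) := by omega
    have c2 : ((a : ℕ) % 2 = 0) := by omega
    have c3 : ((j : ℕ) = (a : ℕ) + 1) := by omega
    rw [if_pos c1, if_pos c2, if_pos c3]
  have hA2 : Avf v f j j = 1 := by
    simp only [Avf, Matrix.of_apply]
    have c2 : ¬ ((j : ℕ) % 2 = 0) := by omega
    rw [if_pos hj, if_neg c2]
    simp
  rw [hA1, hA2, mul_one, mul_one]

lemma phi_apply_ge (hvf : Even (v - f)) (x : Fin v → ZMod 2) (j : Fin v)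
    (hj : v - f ≤ (j : ℕ)) :
    phi v f x j = x j := by
  obtain ⟨m, hm⟩ := hvf
  rw [phi_apply]
  rw [Finset.sum_eq_single j]
  · have : Avf v f j j = 1 := by
      simp only [Avf, Matrix.of_apply]
      rw [if_neg (by omega)]
      simp
    rw [this, mul_one]
  · intro b _ hb
    have hb' : (b : ℕ) ≠ (j : ℕ) := fun h => hb (Fin.ext h)
    have : Avf v f b j = 0 := by
      simp only [Avf, Matrix.of_apply]
      by_cases h1 : (b : ℕ) < v - f
      · rw [if_pos h1]
        by_cases h2 : (b : ℕ) % 2 = 0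
        · rw [if_pos h2, if_neg (by omega)]
        · rw [if_neg h2, if_neg (by omega)]
      · rw [if_neg h1, if_neg (fun h : j = b => absurd (congrArg Fin.val h) (by omega))]
    rw [this, mul_zero]
  · intro h; exact absurd (Finset.mem_univ _) h

end

section
variable {v f : ℕ}

lemma phi_apply_even' (hvf : Even (v - f)) (x : Fin v → ZMod 2) (j k : Fin v)
    (hj : (j : ℕ) < v - f) (he : (j : ℕ) % 2 = 0) (hk : (k : ℕ) = (j : ℕ) + 1) :
    phi v f x j = x k := by
  have hb : (j : ℕ) + 1 < v := by have := k.isLt; omega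
  rw [phi_apply_even hvf x j hj he hb]
  congr 1
  exact (Fin.ext hk).symm

lemma phi_apply_odd' (x : Fin v → ZMod 2) (j k : Fin v)
    (hj : (j : ℕ) < v - f) (ho : (j : ℕ) % 2 = 1) (hk : (k : ℕ) = (j : ℕ) - 1) :
    phi v f x j = x k + x j := by
  have hb : (j : ℕ) - 1 < v := by have := j.isLt; omega
  rw [phi_apply_odd x j hj ho hb]
  congr 2
  exact (Fin.ext hk).symm

/-- the projection onto the last `f` coordinates -/
def prW (v f : ℕ) (x : Fin v → ZMod 2) : Fin v → ZMod 2 :=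
  fun i => if (i : ℕ) < v - f then 0 else x i

lemma prW_phi (hvf : Even (v - f)) (x : Fin v → ZMod 2) :
    prW v f (phi v f x) = prW v f x := by
  funext j
  by_cases hj : (j : ℕ) < v - f
  · simp [prW, hj]
  · simp only [prW, if_neg hj]
    exact phi_apply_ge hvf x j (by omega)

lemma phi_prW (hvf : Even (v - f)) (x : Fin v → ZMod 2) :
    phi v f (prW v f x) = prW v f x := by
  obtain ⟨m, hm⟩ := id hvf
  funext j
  by_cases hj : (j : ℕ) < v - f
  · rcases Nat.even_or_odd (j : ℕ) with he | ho
    · have he' : (j : ℕ) % 2 = 0 := Nat.even_iff.mp he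
      obtain ⟨j1, hv1⟩ : ∃ j1 : Fin v, (j1 : ℕ) = (j : ℕ) + 1 :=
        ⟨⟨(j : ℕ) + 1, by omega⟩, rfl⟩
      rw [phi_apply_even' hvf _ j j1 hj he' hv1]
      simp only [prW]
      rw [if_pos hj, if_pos (show (j1 : ℕ) < v - f by omega)]
    · have ho' : (j : ℕ) % 2 = 1 := Nat.odd_iff.mp ho
      obtain ⟨j1, hv1⟩ : ∃ j1 : Fin v, (j1 : ℕ) = (j : ℕ) - 1 :=
        ⟨⟨(j : ℕ) - 1, by omega⟩, rfl⟩
      rw [phi_apply_odd' _ j j1 hj ho' hv1]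
      simp only [prW]
      rw [if_pos hj, if_pos (show (j1 : ℕ) < v - f by omega), add_zero]
  · rw [phi_apply_ge hvf _ j (by omega)]

lemma phi_phi_phi (hvf : Even (v - f)) (x : Fin v → ZMod 2) :
    phi v f (phi v f (phi v f x)) = x := by
  obtain ⟨m, hm⟩ := id hvf
  funext j
  by_cases hj : (j : ℕ) < v - f
  · have hsub : v - f ≤ v := Nat.sub_le v f
    rcases Nat.even_or_odd (j : ℕ) with he | ho
    · have he' : (j : ℕ) % 2 = 0 := Nat.even_iff.mp he
      obtain ⟨j1, hv1⟩ : ∃ j1 : Fin v, (j1 : ℕ) = (j : ℕ) + 1 :=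
        ⟨⟨(j : ℕ) + 1, by omega⟩, rfl⟩
      have ho1 : (j1 : ℕ) % 2 = 1 := by omega
      have hl1 : (j1 : ℕ) < v - f := by omega
      have hd1 : (j : ℕ) = (j1 : ℕ) - 1 := by omega
      rw [phi_apply_even' hvf (phi v f (phi v f x)) j j1 hj he' hv1]
      rw [phi_apply_odd' (phi v f x) j1 j hl1 ho1 hd1]
      rw [phi_apply_even' hvf x j j1 hj he' hv1]
      rw [phi_apply_odd' x j1 j hl1 ho1 hd1]
      have : ∀ a b : ZMod 2, a + (b + a) = b := by decide
      exact this _ _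
    · have ho' : (j : ℕ) % 2 = 1 := Nat.odd_iff.mp ho
      obtain ⟨j1, hv1⟩ : ∃ j1 : Fin v, (j1 : ℕ) = (j : ℕ) - 1 :=
        ⟨⟨(j : ℕ) - 1, by omega⟩, rfl⟩
      have he1 : (j1 : ℕ) % 2 = 0 := by omega
      have hl1 : (j1 : ℕ) < v - f := by omega
      have hd1 : (j : ℕ) = (j1 : ℕ) + 1 := by omega
      rw [phi_apply_odd' (phi v f (phi v f x)) j j1 hj ho' hv1]
      rw [phi_apply_even' hvf (phi v f x) j1 j hl1 he1 hd1]
      rw [phi_apply_odd' (phi v f x) j j1 hj ho' hv1]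
      rw [phi_apply_even' hvf x j1 j hl1 he1 hd1]
      rw [phi_apply_odd' x j j1 hj ho' hv1]
      have : ∀ a b : ZMod 2, (a + b) + (b + (a + b)) = b := by decide
      exact this _ _
  · rw [phi_apply_ge hvf _ j (by omega), phi_apply_ge hvf _ j (by omega),
        phi_apply_ge hvf _ j (by omega)]

lemma phi_fixed_iff (hvf : Even (v - f)) (x : Fin v → ZMod 2) :
    phi v f x = x ↔ prW v f x = x := by
  obtain ⟨m, hm⟩ := id hvf
  constructor
  · intro h
    have hpt : ∀ j : Fin v, phi v f x j = x j := fun j => congrFun h j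
    have heven : ∀ j : Fin v, (j : ℕ) < v - f → (j : ℕ) % 2 = 0 → x j = 0 := by
      intro j hj he
      obtain ⟨j1, hv1⟩ : ∃ j1 : Fin v, (j1 : ℕ) = (j : ℕ) + 1 :=
        ⟨⟨(j : ℕ) + 1, by omega⟩, rfl⟩
      have h1 := hpt j1
      rw [phi_apply_odd' _ j1 j (by omega) (by omega) (by omega)] at h1
      have : ∀ a b : ZMod 2, a + b = b → a = 0 := by decide
      exact this _ _ h1
    have hzero : ∀ j : Fin v, (j : ℕ) < v - f → x j = 0 := by
      intro j hj
      rcases Nat.even_or_odd (j : ℕ) with he | ho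
      · exact heven j hj (Nat.even_iff.mp he)
      · have ho' : (j : ℕ) % 2 = 1 := Nat.odd_iff.mp ho
        obtain ⟨j1, hv1⟩ : ∃ j1 : Fin v, (j1 : ℕ) = (j : ℕ) - 1 :=
          ⟨⟨(j : ℕ) - 1, by omega⟩, rfl⟩
        have h1 := hpt j1
        rw [phi_apply_even' hvf _ j1 j (by omega) (by omega) (by omega)] at h1
        rw [h1]
        exact heven j1 (by omega) (by omega)
    funext j
    by_cases hj : (j : ℕ) < v - f
    · simp [prW, hj, hzero j hj]
    · simp [prW, hj]
  · intro h
    conv_lhs => rw [← h]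
    rw [phi_prW hvf]
    exact h

lemma sum_phi (hvf : Even (v - f)) (x : Fin v → ZMod 2) :
    x + phi v f x + phi v f (phi v f x) = prW v f x := by
  obtain ⟨m, hm⟩ := id hvf
  funext j
  simp only [Pi.add_apply]
  by_cases hj : (j : ℕ) < v - f
  · have hsub : v - f ≤ v := Nat.sub_le v f
    rcases Nat.even_or_odd (j : ℕ) with he | ho
    · have he' : (j : ℕ) % 2 = 0 := Nat.even_iff.mp he
      obtain ⟨j1, hv1⟩ : ∃ j1 : Fin v, (j1 : ℕ) = (j : ℕ) + 1 :=
        ⟨⟨(j : ℕ) + 1, by omega⟩, rfl⟩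
      have ho1 : (j1 : ℕ) % 2 = 1 := by omega
      have hl1 : (j1 : ℕ) < v - f := by omega
      have hd1 : (j : ℕ) = (j1 : ℕ) - 1 := by omega
      rw [phi_apply_even' hvf x j j1 hj he' hv1,
          phi_apply_even' hvf (phi v f x) j j1 hj he' hv1,
          phi_apply_odd' x j1 j hl1 ho1 hd1]
      simp only [prW, if_pos hj]
      have : ∀ a b : ZMod 2, a + b + (a + b) = 0 := by decide
      exact this _ _
    · have ho' : (j : ℕ) % 2 = 1 := Nat.odd_iff.mp ho
      obtain ⟨j1, hv1⟩ : ∃ j1 : Fin v, (j1 : ℕ) = (j : ℕ) - 1 :=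
        ⟨⟨(j : ℕ) - 1, by omega⟩, rfl⟩
      have he1 : (j1 : ℕ) % 2 = 0 := by omega
      have hl1 : (j1 : ℕ) < v - f := by omega
      have hd1 : (j : ℕ) = (j1 : ℕ) + 1 := by omega
      rw [phi_apply_odd' x j j1 hj ho' hv1,
          phi_apply_odd' (phi v f x) j j1 hj ho' hv1,
          phi_apply_even' hvf x j1 j hl1 he1 hd1,
          phi_apply_odd' x j j1 hj ho' hv1]
      simp only [prW, if_pos hj]
      have : ∀ a b : ZMod 2, b + (a + b) + (b + (a + b)) = 0 := by decide
      exact this _ _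
  · rw [phi_apply_ge hvf _ j (by omega), phi_apply_ge hvf _ j (by omega),
        phi_apply_ge hvf _ j (by omega)]
    simp only [prW, if_neg hj]
    have : ∀ a : ZMod 2, a + a + a = a := by decide
    exact this _

end

open Module

lemma card_eq_mul_of_fibers {X T : Type*} [Finite X] [Finite T] (p : X → T) (k : ℕ)
    (h : ∀ t : T, Nat.card {x : X // p x = t} = k) : Nat.card X = k * Nat.card T := by
  classical
  cases nonempty_fintype X
  cases nonempty_fintype T
  rw [Nat.card_eq_fintype_card, Nat.card_eq_fintype_card]
  rw [← Fintype.card_congr (Equiv.sigmaFiberEquiv p)]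
  rw [Fintype.card_sigma]
  have : ∀ t : T, Fintype.card {x : X // p x = t} = k := by
    intro t; rw [← Nat.card_eq_fintype_card]; exact h t
  simp [this, Finset.sum_const, mul_comm]

section
variable (M : Type*) [AddCommGroup M] [Module (ZMod 2) M] [Finite M]

instance finite_submodules : Finite (Submodule (ZMod 2) M) :=
  Finite.of_injective (fun E => (E : Set M)) SetLike.coe_injective

lemma card_dim3_mul :
    Nat.card {E : Submodule (ZMod 2) M // finrank (ZMod 2) E = 3} * 168
      = (2 ^ finrank (ZMod 2) M - 1) * (2 ^ finrank (ZMod 2) M - 2)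
        * (2 ^ finrank (ZMod 2) M - 4) := by
  classical
  haveI : Module.Finite (ZMod 2) M := Module.Finite.of_finite
  set n := finrank (ZMod 2) M with hn
  by_cases h3 : 3 ≤ n
  · -- the count of linearly independent triples
    have hLI : Nat.card {s : Fin 3 → M // LinearIndependent (ZMod 2) s}
        = (2 ^ n - 1) * (2 ^ n - 2) * (2 ^ n - 4) := by
      rw [card_linearIndependent h3]
      simp [Fin.prod_univ_three, ZMod.card]
      rfl
    -- the span map
    have hspan : ∀ s : {s : Fin 3 → M // LinearIndependent (ZMod 2) s},
        finrank (ZMod 2) (Submodule.span (ZMod 2) (Set.range s.1)) = 3 := by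
      intro s
      rw [finrank_span_eq_card s.2, Fintype.card_fin]
    set p : {s : Fin 3 → M // LinearIndependent (ZMod 2) s}
        → {E : Submodule (ZMod 2) M // finrank (ZMod 2) E = 3} :=
      fun s => ⟨Submodule.span (ZMod 2) (Set.range s.1), hspan s⟩ with hp
    have hfib : ∀ E : {E : Submodule (ZMod 2) M // finrank (ZMod 2) E = 3},
        Nat.card {s // p s = E} = 168 := by
      intro E
      have hE3 : finrank (ZMod 2) E.1 = 3 := E.2
      -- fiber is equivalent to linearly independent triples in E
      have e : {s // p s = E} ≃ {t : Fin 3 → E.1 // LinearIndependent (ZMod 2) t} := by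
        refine ⟨fun s => ⟨fun i => ⟨s.1.1 i, ?_⟩, ?_⟩, fun t => ⟨⟨fun i => (t.1 i : M), ?_⟩, ?_⟩, ?_, ?_⟩
        · have : s.1.1 i ∈ Submodule.span (ZMod 2) (Set.range s.1.1) :=
            Submodule.subset_span ⟨i, rfl⟩
          have hE := congrArg Subtype.val s.2
          simp only [hp] at hE
          rwa [hE] at this
        · apply LinearIndependent.of_comp E.1.subtype
          convert s.1.2 using 1
          rfl
        · exact (t.2.map' E.1.subtype (Submodule.ker_subtype E.1))
        · -- span of the image is E
          apply Subtype.ext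
          simp only [hp]
          have hrange : Set.range (fun i => (t.1 i : M)) = E.1.subtype '' (Set.range t.1) := by
            ext y; simp
          rw [hrange, ← Submodule.map_span]
          have htop : Submodule.span (ZMod 2) (Set.range t.1) = ⊤ := by
            apply Submodule.eq_top_of_finrank_eq
            rw [finrank_span_eq_card t.2, Fintype.card_fin, hE3]
          rw [htop, Submodule.map_subtype_top]
        · intro s; apply Subtype.ext; rfl
        · intro t; apply Subtype.ext; funext i; apply Subtype.ext; rfl
      rw [Nat.card_congr e]
      have : (3 : ℕ) ≤ finrank (ZMod 2) E.1 := by rw [hE3]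
      rw [card_linearIndependent this]
      rw [hE3]
      simp [Fin.prod_univ_three, ZMod.card]
    have := card_eq_mul_of_fibers p 168 hfib
    rw [hLI] at this
    rw [mul_comm]
    exact this.symm
  · have hempty : IsEmpty {E : Submodule (ZMod 2) M // finrank (ZMod 2) E = 3} := by
      constructor
      intro E
      exact h3 (E.2 ▸ (E.1.finrank_le))
    rw [Nat.card_of_isEmpty, zero_mul]
    interval_cases n <;> norm_num

lemma arith3 (n : ℕ) :
    (2 ^ n - 1) * (2 ^ n - 2) * (2 ^ n - 4) / 168
      = (2 ^ n - 1) * (2 ^ (n - 1) - 1) * (2 ^ (n - 2) - 1) / 21 := by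
  match n with
  | 0 => norm_num
  | 1 => norm_num
  | (n + 2) =>
    have hk : 1 ≤ 2 ^ n := Nat.one_le_two_pow
    have e1 : (2 : ℕ) ^ (n + 2) = 4 * 2 ^ n := by ring
    have e2 : (2 : ℕ) ^ (n + 1) = 2 * 2 ^ n := by ring
    rw [e1, show n + 2 - 1 = n + 1 from rfl, show n + 2 - 2 = n from rfl, e2]
    set k := 2 ^ n with hkdef
    have h2 : 4 * k - 2 = 2 * (2 * k - 1) := by omega
    have h4 : 4 * k - 4 = 4 * (k - 1) := by omega
    rw [h2, h4]
    have : (4 * k - 1) * (2 * (2 * k - 1)) * (4 * (k - 1))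
        = 8 * ((4 * k - 1) * (2 * k - 1) * (k - 1)) := by ring
    rw [this, show (168 : ℕ) = 8 * 21 from rfl, Nat.mul_div_mul_left _ _ (by norm_num)]

lemma card_dim3 :
    Nat.card {E : Submodule (ZMod 2) M // finrank (ZMod 2) E = 3}
      = (2 ^ finrank (ZMod 2) M - 1) * (2 ^ (finrank (ZMod 2) M - 1) - 1)
        * (2 ^ (finrank (ZMod 2) M - 2) - 1) / 21 := by
  rw [← arith3]
  symm
  apply Nat.div_eq_of_eq_mul_left (by norm_num : (0:ℕ) < 168)
  exact (card_dim3_mul M).symm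

end

open Module

section
variable {v f : ℕ}

def Wsub (v f : ℕ) : Submodule (ZMod 2) (Fin v → ZMod 2) where
  carrier := {x | ∀ i : Fin v, (i : ℕ) < v - f → x i = 0}
  add_mem' := fun ha hb i hi => by simp [Pi.add_apply, ha i hi, hb i hi]
  zero_mem' := fun i hi => rfl
  smul_mem' := fun c x hx i hi => by simp [Pi.smul_apply, hx i hi]

lemma apply_fin_congr {α : Type*} (x : Fin v → α) {a b : Fin v}
    (h : (a : ℕ) = (b : ℕ)) : x a = x b := congrArg x (Fin.ext h)

lemma mem_Wsub (x : Fin v → ZMod 2) : x ∈ Wsub v f ↔ prW v f x = x := by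
  constructor
  · intro hx
    funext i
    by_cases hi : (i : ℕ) < v - f
    · simp [prW, hi, (hx i hi).symm]
    · simp [prW, hi]
  · intro h i hi
    have := congrFun h i
    simp only [prW, if_pos hi] at this
    exact this.symm

lemma mapMat_eq_map_phi (E : Submodule (ZMod 2) (Fin v → ZMod 2)) :
    mapMat (Avf v f) E = E.map (phi v f) := rfl

lemma phi_mem_W (hvf : Even (v - f)) {x : Fin v → ZMod 2} (hx : x ∈ Wsub v f) :
    phi v f x = x :=
  (phi_fixed_iff hvf x).mpr ((mem_Wsub x).mp hx)

lemma map_phi_eq_self_of_le_W (hvf : Even (v - f))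
    {E : Submodule (ZMod 2) (Fin v → ZMod 2)} (hE : E ≤ Wsub v f) :
    mapMat (Avf v f) E = E := by
  rw [mapMat_eq_map_phi]
  ext y
  rw [Submodule.mem_map]
  constructor
  · rintro ⟨x, hx, rfl⟩
    rwa [phi_mem_W hvf (hE hx)]
  · intro hy
    exact ⟨y, hy, phi_mem_W hvf (hE hy)⟩

lemma phi_inj (hvf : Even (v - f)) {x y : Fin v → ZMod 2}
    (h : phi v f x = phi v f y) : x = y := by
  have := congrArg (fun z => phi v f (phi v f z)) h
  simpa [phi_phi_phi hvf] using this

lemma mapMat_span_singleton (x : Fin v → ZMod 2) :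
    mapMat (Avf v f) (Submodule.span (ZMod 2) {x})
      = Submodule.span (ZMod 2) {phi v f x} := by
  rw [mapMat_eq_map_phi, Submodule.map_span, Set.image_singleton]

lemma pointwiseFixed_iff (hvf : Even (v - f)) (E : Submodule (ZMod 2) (Fin v → ZMod 2)) :
    PointwiseFixed (Avf v f) E ↔ E ≤ Wsub v f := by
  constructor
  · intro h x hxE
    rw [mem_Wsub, ← phi_fixed_iff hvf]
    by_cases hx0 : x = 0
    · simp [hx0]
    · have hP := h (Submodule.span (ZMod 2) {x}) (finrank_span_singleton hx0)
        ((Submodule.span_singleton_le_iff_mem x E).mpr hxE)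
      rw [mapMat_span_singleton] at hP
      have : phi v f x ∈ Submodule.span (ZMod 2) {x} := by
        rw [← hP]; exact Submodule.mem_span_singleton_self _
      obtain ⟨a, ha⟩ := Submodule.mem_span_singleton.mp this
      have ha2 : ∀ b : ZMod 2, b = 0 ∨ b = 1 := by decide
      rcases ha2 a with rfl | rfl
      · exfalso
        rw [zero_smul] at ha
        apply hx0
        have : phi v f (phi v f (phi v f x)) = phi v f (phi v f 0) := by rw [ha]
        rwa [phi_phi_phi hvf, map_zero, map_zero] at this
      · rw [one_smul] at ha; exact ha.symm
  · intro h P _ hPE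
    exact map_phi_eq_self_of_le_W hvf (le_trans hPE h)

/-- the linear equivalence between `Wsub` and `GF(2)^f`. -/
noncomputable def WsubEquiv (hfv : f ≤ v) : (Wsub v f) ≃ₗ[ZMod 2] (Fin f → ZMod 2) where
  toFun x := fun k => x.1 ⟨v - f + (k : ℕ), by omega⟩
  map_add' x y := rfl
  map_smul' c x := rfl
  invFun b := ⟨fun i => if h : v - f ≤ (i : ℕ) then b ⟨(i : ℕ) - (v - f), by have := i.isLt; omega⟩ else 0,
    fun i hi => by simp only [dif_neg (by omega : ¬ v - f ≤ (i : ℕ))]⟩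
  left_inv := by
    intro x
    apply Subtype.ext
    funext i
    by_cases h : v - f ≤ (i : ℕ)
    · simp only [dif_pos h]
      exact apply_fin_congr _ (by simp only [Fin.val_mk]; omega)
    · simp only [dif_neg h]
      exact (x.2 i (by omega)).symm
  right_inv := by
    intro b
    funext k
    simp only [dif_pos (show v - f ≤ v - f + (k : ℕ) by omega)]
    exact congrArg b (Fin.ext (by simp only [Fin.val_mk]; omega))

lemma finrank_Wsub (hfv : f ≤ v) : finrank (ZMod 2) (Wsub v f) = f := by
  rw [LinearEquiv.finrank_eq (WsubEquiv hfv), Module.finrank_fintype_fun_eq_card,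
    Fintype.card_fin]

/-- the equivalence between 3-dimensional submodules of `Wsub` and planes inside `Wsub` -/
noncomputable def dim3Equiv :
    {q : Submodule (ZMod 2) (Wsub v f) // finrank (ZMod 2) q = 3}
      ≃ {E : Submodule (ZMod 2) (Fin v → ZMod 2) // finrank (ZMod 2) E = 3 ∧ E ≤ Wsub v f} where
  toFun q := ⟨Submodule.map (Wsub v f).subtype q.1,
    by rw [Submodule.finrank_map_subtype_eq]; exact q.2,
    Submodule.map_subtype_le _ _⟩
  invFun E := ⟨Submodule.comap (Wsub v f).subtype E.1, by
    have : Submodule.map (Wsub v f).subtype (Submodule.comap (Wsub v f).subtype E.1) = E.1 := by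
      rw [Submodule.map_comap_subtype]
      exact inf_eq_right.mpr E.2.2
    rw [← Submodule.finrank_map_subtype_eq, this]
    exact E.2.1⟩
  left_inv q := by
    apply Subtype.ext
    show Submodule.comap _ (Submodule.map _ _) = _
    exact Submodule.comap_map_eq_of_injective (Submodule.injective_subtype _) _
  right_inv E := by
    apply Subtype.ext
    show Submodule.map _ (Submodule.comap _ _) = _
    rw [Submodule.map_comap_subtype]
    exact inf_eq_right.mpr E.2.2

theorem count_type7 (hfv : f ≤ v) (hvf : Even (v - f)) :
    Nat.card {E : Submodule (ZMod 2) (Fin v → ZMod 2) |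
        IsFixedPlane (Avf v f) E ∧ PointwiseFixed (Avf v f) E}
      = (2 ^ f - 1) * (2 ^ (f - 1) - 1) * (2 ^ (f - 2) - 1) / 21 := by
  have hset : {E : Submodule (ZMod 2) (Fin v → ZMod 2) |
        IsFixedPlane (Avf v f) E ∧ PointwiseFixed (Avf v f) E}
      = {E : Submodule (ZMod 2) (Fin v → ZMod 2) | finrank (ZMod 2) E = 3 ∧ E ≤ Wsub v f} := by
    ext E
    simp only [Set.mem_setOf_eq]
    constructor
    · rintro ⟨⟨h1, _⟩, h2⟩
      exact ⟨h1, (pointwiseFixed_iff hvf E).mp h2⟩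
    · rintro ⟨h1, h2⟩
      exact ⟨⟨h1, map_phi_eq_self_of_le_W hvf h2⟩, (pointwiseFixed_iff hvf E).mpr h2⟩
  rw [hset]
  have : Nat.card {E : Submodule (ZMod 2) (Fin v → ZMod 2) //
      finrank (ZMod 2) E = 3 ∧ E ≤ Wsub v f}
      = (2 ^ f - 1) * (2 ^ (f - 1) - 1) * (2 ^ (f - 2) - 1) / 21 := by
    rw [← Nat.card_congr dim3Equiv]
    rw [card_dim3 (Wsub v f), finrank_Wsub hfv]
  exact this

end

open Module

section
variable {v f : ℕ}

/-- `x` has nonzero `W`-part and nonzero `U`-part. -/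
def Good (v f : ℕ) (x : Fin v → ZMod 2) : Prop :=
  prW v f x ≠ 0 ∧ prW v f x ≠ x

/-- the splitting of `GF(2)^v` into first `v-f` and last `f` coordinates -/
def splitEquiv (hfv : f ≤ v) :
    (Fin v → ZMod 2) ≃ (Fin (v - f) → ZMod 2) × (Fin f → ZMod 2) where
  toFun x := (fun k => x ⟨(k : ℕ), by have := k.isLt; omega⟩,
    fun k => x ⟨v - f + (k : ℕ), by have := k.isLt; omega⟩)
  invFun p := fun i =>
    if h : (i : ℕ) < v - f then p.1 ⟨(i : ℕ), h⟩
    else p.2 ⟨(i : ℕ) - (v - f), by have := i.isLt; omega⟩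
  left_inv x := by
    funext i
    by_cases h : (i : ℕ) < v - f
    · simp only [dif_pos h]
    · simp only [dif_neg h]
      exact apply_fin_congr _ (by simp only [Fin.val_mk]; omega)
  right_inv p := by
    apply Prod.ext
    · funext k
      have hk : ((⟨(k : ℕ), by have := k.isLt; omega⟩ : Fin v) : ℕ) < v - f := k.isLt
      simp only [dif_pos hk]
    · funext k
      have hk : ¬ ((⟨v - f + (k : ℕ), by have := k.isLt; omega⟩ : Fin v) : ℕ) < v - f := by
        simp only [Fin.val_mk]; omega
      simp only [dif_neg hk]
      exact congrArg p.2 (Fin.ext (by simp only [Fin.val_mk]; omega))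

lemma good_iff (hfv : f ≤ v) (x : Fin v → ZMod 2) :
    Good v f x ↔ ((splitEquiv hfv x).1 ≠ 0 ∧ (splitEquiv hfv x).2 ≠ 0) := by
  have h1 : prW v f x ≠ x ↔ (splitEquiv hfv x).1 ≠ 0 := by
    apply not_congr
    constructor
    · intro h
      funext k
      have := congrFun h ⟨(k : ℕ), by have := k.isLt; omega⟩
      simp only [prW, Fin.val_mk, if_pos k.isLt] at this
      exact this.symm
    · intro h
      funext i
      simp only [prW]
      by_cases hi : (i : ℕ) < v - f
      · rw [if_pos hi]
        have := congrFun h ⟨(i : ℕ), hi⟩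
        simp only [Pi.zero_apply] at this
        rw [← this]
        exact (apply_fin_congr x (by simp only [Fin.val_mk])).symm
      · rw [if_neg hi]
  have h2 : prW v f x ≠ 0 ↔ (splitEquiv hfv x).2 ≠ 0 := by
    apply not_congr
    constructor
    · intro h
      funext k
      have := congrFun h ⟨v - f + (k : ℕ), by have := k.isLt; omega⟩
      simp only [prW, Fin.val_mk, if_neg (by omega : ¬ v - f + (k : ℕ) < v - f),
        Pi.zero_apply] at this
      exact this
    · intro h
      funext i
      simp only [prW, Pi.zero_apply]
      by_cases hi : (i : ℕ) < v - f
      · rw [if_pos hi]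
      · rw [if_neg hi]
        have := congrFun h ⟨(i : ℕ) - (v - f), by have := i.isLt; omega⟩
        simp only [Pi.zero_apply] at this
        rw [← this]
        exact apply_fin_congr x (by simp only [Fin.val_mk]; omega)
  exact ⟨fun h => ⟨h1.mp h.2, h2.mp h.1⟩, fun h => ⟨h2.mpr h.2, h1.mpr h.1⟩⟩

lemma card_ne_zero_fun (n : ℕ) :
    Nat.card {a : Fin n → ZMod 2 // a ≠ 0} = 2 ^ n - 1 := by
  rw [Nat.card_eq_fintype_card]
  simp only [ne_eq]
  rw [Fintype.card_subtype_compl,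
    Fintype.card_subtype_eq (0 : Fin n → ZMod 2), Fintype.card_fun, ZMod.card, Fintype.card_fin]

lemma card_good (hfv : f ≤ v) :
    Nat.card {x : Fin v → ZMod 2 // Good v f x} = (2 ^ (v - f) - 1) * (2 ^ f - 1) := by
  have e1 : {x : Fin v → ZMod 2 // Good v f x}
      ≃ {p : (Fin (v - f) → ZMod 2) × (Fin f → ZMod 2) // p.1 ≠ 0 ∧ p.2 ≠ 0} :=
    (Equiv.subtypeEquiv (splitEquiv hfv) (fun x => by
      rw [good_iff hfv x]))
  have e2 : {p : (Fin (v - f) → ZMod 2) × (Fin f → ZMod 2) // p.1 ≠ 0 ∧ p.2 ≠ 0}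
      ≃ {a : Fin (v - f) → ZMod 2 // a ≠ 0} × {b : Fin f → ZMod 2 // b ≠ 0} :=
    Equiv.subtypeProdEquivProd (p := fun a : Fin (v - f) → ZMod 2 => a ≠ 0)
      (q := fun b : Fin f → ZMod 2 => b ≠ 0)
  rw [Nat.card_congr (e1.trans e2), Nat.card_prod, card_ne_zero_fun, card_ne_zero_fun]

end

open Module Submodule

section
variable {v f : ℕ}

-- char-2 helpers for functions
lemma pi2_add_self (a : Fin v → ZMod 2) : a + a = 0 := by
  funext j; simp only [Pi.add_apply, Pi.zero_apply]
  exact (by decide : ∀ p : ZMod 2, p + p = 0) _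

lemma pi2_add_eq_zero {a b : Fin v → ZMod 2} (h : a + b = 0) : a = b := by
  funext j
  have := congrFun h j
  simp only [Pi.add_apply, Pi.zero_apply] at this
  exact (by decide : ∀ p q : ZMod 2, p + q = 0 → p = q) _ _ this

lemma zmod2_cases (a : ZMod 2) : a = 0 ∨ a = 1 := by
  revert a; decide

-- prW is additive and idempotent
lemma prW_add (x y : Fin v → ZMod 2) : prW v f (x + y) = prW v f x + prW v f y := by
  funext j
  by_cases hj : (j : ℕ) < v - f <;> simp [prW, hj]

lemma prW_smul (c : ZMod 2) (x : Fin v → ZMod 2) : prW v f (c • x) = c • prW v f x := by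
  funext j
  by_cases hj : (j : ℕ) < v - f <;> simp [prW, hj]

lemma prW_prW (x : Fin v → ZMod 2) : prW v f (prW v f x) = prW v f x := by
  funext j
  by_cases hj : (j : ℕ) < v - f <;> simp [prW, hj]

lemma prW_zero : prW v f (0 : Fin v → ZMod 2) = 0 := by
  funext j
  by_cases hj : (j : ℕ) < v - f <;> simp [prW, hj]

variable (hvf : Even (v - f))

include hvf

lemma good_ne_zero {x : Fin v → ZMod 2} (hx : Good v f x) : x ≠ 0 := by
  rintro rfl
  exact hx.1 prW_zero

lemma good_phi_ne_self {x : Fin v → ZMod 2} (hx : Good v f x) : phi v f x ≠ x :=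
  fun h => hx.2 ((phi_fixed_iff hvf x).mp h)

lemma good_phi {x : Fin v → ZMod 2} (hx : Good v f x) : Good v f (phi v f x) := by
  constructor
  · rw [prW_phi hvf]; exact hx.1
  · intro h
    have h2 : phi v f (phi v f x) = phi v f x := by
      conv_lhs => rw [← h]
      rw [phi_prW hvf]
      exact h
    exact good_phi_ne_self hvf hx (phi_inj hvf h2)

lemma good_phi2 {x : Fin v → ZMod 2} (hx : Good v f x) : Good v f (phi v f (phi v f x)) :=
  good_phi hvf (good_phi hvf hx)

lemma good_phi2_ne_phi {x : Fin v → ZMod 2} (hx : Good v f x) :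
    phi v f (phi v f x) ≠ phi v f x :=
  good_phi_ne_self hvf (good_phi hvf hx)

lemma good_phi2_ne_self {x : Fin v → ZMod 2} (hx : Good v f x) :
    phi v f (phi v f x) ≠ x := by
  intro h
  apply good_phi_ne_self hvf hx
  conv_rhs => rw [← phi_phi_phi hvf x]
  rw [h]

lemma good_sum_ne_zero {x : Fin v → ZMod 2} (hx : Good v f x) :
    x + phi v f x + phi v f (phi v f x) ≠ 0 := by
  rw [sum_phi hvf]; exact hx.1

lemma good_li {x : Fin v → ZMod 2} (hx : Good v f x) :
    LinearIndependent (ZMod 2) ![x, phi v f x, phi v f (phi v f x)] := by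
  rw [Fintype.linearIndependent_iff]
  intro g hg
  rw [Fin.sum_univ_three] at hg
  simp only [Matrix.cons_val_zero, Matrix.cons_val_one, Matrix.head_cons,
    Matrix.cons_val_two, Matrix.tail_cons] at hg
  have hall : (∀ i, g i = 0) ↔ (g 0 = 0 ∧ g 1 = 0 ∧ g 2 = 0) := by
    constructor
    · intro h; exact ⟨h 0, h 1, h 2⟩
    · rintro ⟨h0, h1, h2⟩ i; fin_cases i <;> assumption
  rw [hall]
  rcases zmod2_cases (g 0) with h0 | h0 <;> rcases zmod2_cases (g 1) with h1 | h1 <;>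
    rcases zmod2_cases (g 2) with h2 | h2 <;> rw [h0, h1, h2] at hg <;>
    simp only [zero_smul, one_smul, add_zero, zero_add] at hg
  · exact ⟨h0, h1, h2⟩
  · exact absurd hg (good_ne_zero hvf (good_phi2 hvf hx))
  · exact absurd hg (good_ne_zero hvf (good_phi hvf hx))
  · exact absurd (pi2_add_eq_zero hg) (good_phi2_ne_phi hvf hx).symm
  · exact absurd hg (good_ne_zero hvf hx)
  · exact absurd (pi2_add_eq_zero hg) (good_phi2_ne_self hvf hx).symm
  · exact absurd (pi2_add_eq_zero hg) (good_phi_ne_self hvf hx).symm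
  · exact absurd hg (good_sum_ne_zero hvf hx)

omit hvf

lemma range_triple {α : Type*} (a b c : α) : Set.range ![a, b, c] = {a, b, c} := by
  ext y
  constructor
  · rintro ⟨i, rfl⟩
    fin_cases i <;> simp
  · rintro (rfl | rfl | rfl)
    exacts [⟨0, rfl⟩, ⟨1, rfl⟩, ⟨2, rfl⟩]

lemma range_pair {α : Type*} (a b : α) : Set.range ![a, b] = {a, b} := by
  ext y
  constructor
  · rintro ⟨i, rfl⟩
    fin_cases i <;> simp
  · rintro (rfl | rfl)
    exacts [⟨0, rfl⟩, ⟨1, rfl⟩]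

/-- the plane spanned by the orbit of `x` -/
def pl (v f : ℕ) (x : Fin v → ZMod 2) : Submodule (ZMod 2) (Fin v → ZMod 2) :=
  Submodule.span (ZMod 2) {x, phi v f x, phi v f (phi v f x)}

lemma mem_pl_self (x : Fin v → ZMod 2) : x ∈ pl v f x :=
  subset_span (by simp)

lemma mem_pl_phi (x : Fin v → ZMod 2) : phi v f x ∈ pl v f x :=
  subset_span (by simp)

lemma mem_pl_phi2 (x : Fin v → ZMod 2) : phi v f (phi v f x) ∈ pl v f x :=
  subset_span (by simp)

include hvf

lemma finrank_pl {x : Fin v → ZMod 2} (hx : Good v f x) :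
    finrank (ZMod 2) (pl v f x) = 3 := by
  rw [pl, ← range_triple, finrank_span_eq_card (good_li hvf hx), Fintype.card_fin]

lemma map_pl {x : Fin v → ZMod 2} : mapMat (Avf v f) (pl v f x) = pl v f x := by
  rw [mapMat_eq_map_phi, pl, Submodule.map_span]
  congr 1
  rw [Set.image_insert_eq, Set.image_pair, phi_phi_phi hvf]
  ext y
  simp only [Set.mem_insert_iff, Set.mem_singleton_iff]
  tauto

omit hvf

lemma phi_mem_of_inv {E : Submodule (ZMod 2) (Fin v → ZMod 2)}
    (hE : mapMat (Avf v f) E = E) {x : Fin v → ZMod 2} (hx : x ∈ E) :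
    phi v f x ∈ E := by
  have : phi v f x ∈ E.map (phi v f) := Submodule.mem_map_of_mem hx
  rwa [← mapMat_eq_map_phi, hE] at this

lemma mem_pl_iff {x z : Fin v → ZMod 2} :
    z ∈ pl v f x ↔ ∃ g : Fin 3 → ZMod 2,
      g 0 • x + g 1 • phi v f x + g 2 • phi v f (phi v f x) = z := by
  rw [pl, ← range_triple, mem_span_range_iff_exists_fun]
  constructor
  · rintro ⟨g, hg⟩
    refine ⟨g, ?_⟩
    rw [Fin.sum_univ_three] at hg
    simpa using hg
  · rintro ⟨g, hg⟩
    refine ⟨g, ?_⟩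
    rw [Fin.sum_univ_three]
    simpa using hg

include hvf

lemma fixed_in_pl {x z : Fin v → ZMod 2} (hx : Good v f x) (hz : z ∈ pl v f x)
    (hfix : phi v f z = z) : z = 0 ∨ z = prW v f x := by
  obtain ⟨g, hg⟩ := mem_pl_iff.mp hz
  have hphiz : g 2 • x + g 0 • phi v f x + g 1 • phi v f (phi v f x) = z := by
    conv_rhs => rw [← hfix, ← hg]
    rw [map_add, map_add, map_smul, map_smul, map_smul, phi_phi_phi hvf]
    abel
  have hzero : ∑ i, (![g 0 + g 2, g 1 + g 0, g 2 + g 1] : Fin 3 → ZMod 2) i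
      • (![x, phi v f x, phi v f (phi v f x)] : Fin 3 → Fin v → ZMod 2) i = 0 := by
    rw [Fin.sum_univ_three]
    simp only [Matrix.cons_val_zero, Matrix.cons_val_one, Matrix.head_cons,
      Matrix.cons_val_two, Matrix.tail_cons, add_smul]
    have : (g 0 • x + g 1 • phi v f x + g 2 • phi v f (phi v f x))
        + (g 2 • x + g 0 • phi v f x + g 1 • phi v f (phi v f x)) = z + z := by
      rw [hg, hphiz]
    rw [pi2_add_self] at this
    rw [← this]
    abel
  have hcoef := Fintype.linearIndependent_iff.mp (good_li hvf hx) _ hzero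
  have e02 : g 0 = g 2 := by
    have := hcoef 0
    simp only [Matrix.cons_val_zero] at this
    exact (by decide : ∀ p q : ZMod 2, p + q = 0 → p = q) _ _ this
  have e10 : g 1 = g 0 := by
    have := hcoef 1
    simp only [Matrix.cons_val_one, Matrix.head_cons] at this
    exact (by decide : ∀ p q : ZMod 2, p + q = 0 → p = q) _ _ this
  rcases zmod2_cases (g 0) with h0 | h0
  · left
    rw [← hg, h0, e10.trans h0, e02.symm.trans h0]
    simp
  · right
    rw [← hg, h0, e10.trans h0, e02.symm.trans h0]
    simp only [one_smul]
    exact sum_phi hvf x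

lemma U_in_pl {x z : Fin v → ZMod 2} (hx : Good v f x) (hz : z ∈ pl v f x)
    (hU : prW v f z = 0) :
    z = 0 ∨ z = x + phi v f x ∨ z = x + phi v f (phi v f x)
      ∨ z = phi v f x + phi v f (phi v f x) := by
  obtain ⟨g, hg⟩ := mem_pl_iff.mp hz
  have hprW : (g 0 + g 1 + g 2) • prW v f x = 0 := by
    have := congrArg (prW v f) hg
    rw [prW_add, prW_add, prW_smul, prW_smul, prW_smul, prW_phi hvf,
      prW_phi hvf, prW_phi hvf, hU] at this
    rw [add_smul, add_smul]
    exact this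
  have hsum0 : g 0 + g 1 + g 2 = 0 := by
    rcases zmod2_cases (g 0 + g 1 + g 2) with h | h
    · exact h
    · rw [h, one_smul] at hprW
      exact absurd hprW hx.1
  rcases zmod2_cases (g 0) with h0 | h0 <;> rcases zmod2_cases (g 1) with h1 | h1 <;>
    rcases zmod2_cases (g 2) with h2 | h2 <;> rw [h0, h1, h2] at hsum0 hg <;>
    simp only [zero_smul, one_smul, add_zero, zero_add] at hsum0 hg
  · left; exact hg.symm
  · exact absurd hsum0 (by decide)
  · exact absurd hsum0 (by decide)
  · right; right; right; exact hg.symm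
  · exact absurd hsum0 (by decide)
  · right; right; left; exact hg.symm
  · right; left; exact hg.symm
  · exact absurd hsum0 (by decide)

lemma mem_pl_good {x x' : Fin v → ZMod 2} (hx : Good v f x) (hx' : Good v f x')
    (hmem : x' ∈ pl v f x) :
    x' = x ∨ x' = phi v f x ∨ x' = phi v f (phi v f x) := by
  have hinv : mapMat (Avf v f) (pl v f x) = pl v f x := map_pl hvf
  have h1 : phi v f x' ∈ pl v f x := phi_mem_of_inv hinv hmem
  have h2 : phi v f (phi v f x') ∈ pl v f x := phi_mem_of_inv hinv h1
  have hw' : prW v f x' ∈ pl v f x := by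
    rw [← sum_phi hvf x']
    exact add_mem (add_mem hmem h1) h2
  have hwfix : phi v f (prW v f x') = prW v f x' := phi_prW hvf x'
  have hw : prW v f x' = prW v f x := by
    rcases fixed_in_pl hvf hx hw' hwfix with h | h
    · exact absurd h hx'.1
    · exact h
  set u : Fin v → ZMod 2 := x' + prW v f x' with hu
  have huU : prW v f u = 0 := by
    rw [hu, prW_add, prW_prW, pi2_add_self]
  have humem : u ∈ pl v f x := by
    rw [hu, hw]
    apply add_mem hmem
    rw [← sum_phi hvf x]
    exact add_mem (add_mem (mem_pl_self x) (mem_pl_phi x)) (mem_pl_phi2 x)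
  have hx'eq : x' = u + prW v f x := by
    rw [hu, hw]
    funext j
    simp only [Pi.add_apply]
    exact (by decide : ∀ a b : ZMod 2, a = (a + b) + b) _ _
  have hrw : prW v f x = x + phi v f x + phi v f (phi v f x) := (sum_phi hvf x).symm
  rcases U_in_pl hvf hx humem huU with h | h | h | h
  · exfalso
    rw [hu] at h
    have : x' = prW v f x' := pi2_add_eq_zero h
    exact hx'.2 this.symm
  · right; right
    rw [hx'eq, h, hrw]
    funext j
    simp only [Pi.add_apply]
    exact (by decide : ∀ a b c : ZMod 2, (a + b) + (a + b + c) = c) _ _ _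
  · right; left
    rw [hx'eq, h, hrw]
    funext j
    simp only [Pi.add_apply]
    exact (by decide : ∀ a b c : ZMod 2, (a + c) + (a + b + c) = b) _ _ _
  · left
    rw [hx'eq, h, hrw]
    funext j
    simp only [Pi.add_apply]
    exact (by decide : ∀ a b c : ZMod 2, (b + c) + (a + b + c) = a) _ _ _

end

open Module Submodule

section
variable {v f : ℕ}

lemma span_singleton_inj {x y : Fin v → ZMod 2} (hx : x ≠ 0)
    (h : Submodule.span (ZMod 2) {x} = Submodule.span (ZMod 2) {y}) : x = y := by
  have hmem : x ∈ Submodule.span (ZMod 2) {y} := h ▸ mem_span_singleton_self x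
  obtain ⟨a, ha⟩ := mem_span_singleton.mp hmem
  rcases zmod2_cases a with rfl | rfl
  · rw [zero_smul] at ha; exact absurd ha.symm hx
  · rw [one_smul] at ha; exact ha.symm

lemma point_exists {P : Submodule (ZMod 2) (Fin v → ZMod 2)}
    (hP : finrank (ZMod 2) P = 1) : ∃ y, y ≠ 0 ∧ P = Submodule.span (ZMod 2) {y} := by
  have hPbot : P ≠ ⊥ := by
    intro h
    rw [h, finrank_bot] at hP
    exact one_ne_zero hP.symm
  obtain ⟨y, hyP, hy0⟩ := (Submodule.ne_bot_iff P).mp hPbot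
  refine ⟨y, hy0, ?_⟩
  have hle : Submodule.span (ZMod 2) {y} ≤ P := (span_singleton_le_iff_mem y P).mpr hyP
  exact (eq_of_le_of_finrank_le hle (by rw [hP, finrank_span_singleton hy0])).symm

variable (hvf : Even (v - f))
include hvf

lemma li_pair {y : Fin v → ZMod 2} (hy0 : y ≠ 0) (hyf : phi v f y ≠ y) :
    LinearIndependent (ZMod 2) ![y, phi v f y] := by
  rw [Fintype.linearIndependent_iff]
  intro g hg
  rw [Fin.sum_univ_two] at hg
  simp only [Matrix.cons_val_zero, Matrix.cons_val_one, Matrix.head_cons] at hg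
  have hall : (∀ i, g i = 0) ↔ (g 0 = 0 ∧ g 1 = 0) :=
    ⟨fun h => ⟨h 0, h 1⟩, fun ⟨h0, h1⟩ i => by fin_cases i <;> assumption⟩
  rw [hall]
  rcases zmod2_cases (g 0) with h0 | h0 <;> rcases zmod2_cases (g 1) with h1 | h1 <;>
    rw [h0, h1] at hg <;> simp only [zero_smul, one_smul, add_zero, zero_add] at hg
  · exact ⟨h0, h1⟩
  · exfalso
    apply hy0
    apply phi_inj hvf
    rw [hg, map_zero]
  · exact absurd hg hy0
  · exact absurd (pi2_add_eq_zero hg) (Ne.symm hyf)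

lemma finrank_span_pair {y : Fin v → ZMod 2} (hy0 : y ≠ 0) (hyf : phi v f y ≠ y) :
    finrank (ZMod 2) (Submodule.span (ZMod 2) {y, phi v f y}) = 2 := by
  rw [← range_pair, finrank_span_eq_card (li_pair hvf hy0 hyf), Fintype.card_fin]

lemma phi2_eq_add {y : Fin v → ZMod 2} (hyU : prW v f y = 0) :
    phi v f (phi v f y) = y + phi v f y := by
  have hs := sum_phi hvf y
  rw [hyU] at hs
  funext j
  have := congrFun hs j
  simp only [Pi.add_apply, Pi.zero_apply] at this ⊢
  exact (by decide : ∀ a b c : ZMod 2, a + b + c = 0 → c = a + b) _ _ _ this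

lemma phi_mem_span_pair {y : Fin v → ZMod 2} (hyU : prW v f y = 0)
    {h : Fin v → ZMod 2} (hh : h ∈ Submodule.span (ZMod 2) {y, phi v f y}) :
    phi v f h ∈ Submodule.span (ZMod 2) {y, phi v f y} := by
  have hmap : Submodule.map (phi v f) (Submodule.span (ZMod 2) {y, phi v f y})
      ≤ Submodule.span (ZMod 2) {y, phi v f y} := by
    rw [Submodule.map_span, Set.image_pair]
    apply span_le.mpr
    rintro z (rfl | rfl)
    · exact subset_span (by simp)
    · rw [phi2_eq_add hvf hyU]
      exact add_mem (subset_span (by simp)) (subset_span (by simp))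
  exact hmap (Submodule.mem_map_of_mem hh)

/-- the orbit triangle attached to `x` -/
def tri (v f : ℕ) (x : Fin v → ZMod 2) : Set (Submodule (ZMod 2) (Fin v → ZMod 2)) :=
  {Submodule.span (ZMod 2) {x}, Submodule.span (ZMod 2) {phi v f x},
    Submodule.span (ZMod 2) {phi v f (phi v f x)}}

lemma tri_spans_ne {x : Fin v → ZMod 2} (hx : Good v f x) :
    Submodule.span (ZMod 2) {x} ≠ Submodule.span (ZMod 2) {phi v f x}
    ∧ Submodule.span (ZMod 2) {x} ≠ Submodule.span (ZMod 2) {phi v f (phi v f x)}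
    ∧ Submodule.span (ZMod 2) {phi v f x}
        ≠ Submodule.span (ZMod 2) {phi v f (phi v f x)} := by
  refine ⟨fun h => ?_, fun h => ?_, fun h => ?_⟩
  · exact good_phi_ne_self hvf hx (span_singleton_inj (good_ne_zero hvf hx) h).symm
  · exact good_phi2_ne_self hvf hx (span_singleton_inj (good_ne_zero hvf hx) h).symm
  · exact good_phi2_ne_phi hvf hx
      (span_singleton_inj (good_ne_zero hvf (good_phi hvf hx)) h).symm

lemma tri_isOrbitTriangle {x : Fin v → ZMod 2} (hx : Good v f x) :
    IsOrbitTriangle v f (tri v f x) := by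
  obtain ⟨hne1, hne2, hne3⟩ := tri_spans_ne hvf hx
  constructor
  · refine ⟨Submodule.span (ZMod 2) {x}, finrank_span_singleton (good_ne_zero hvf hx), ?_, ?_⟩
    · rw [mapMat_span_singleton, mapMat_span_singleton]
      rfl
    · exact Set.ncard_eq_three.mpr ⟨_, _, _, hne1, hne2, hne3, rfl⟩
  · rintro ⟨L, hL2, hall⟩
    have h1 : x ∈ L := (span_singleton_le_iff_mem _ _).mp
      (hall _ (Or.inl rfl))
    have h2 : phi v f x ∈ L := (span_singleton_le_iff_mem _ _).mp
      (hall _ (Or.inr (Or.inl rfl)))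
    have h3 : phi v f (phi v f x) ∈ L := (span_singleton_le_iff_mem _ _).mp
      (hall _ (Or.inr (Or.inr rfl)))
    have hple : pl v f x ≤ L := by
      rw [pl]
      apply span_le.mpr
      rintro z hz
      simp only [Set.mem_insert_iff, Set.mem_singleton_iff] at hz
      rcases hz with rfl | rfl | rfl
      exacts [h1, h2, h3]
    have hmono := Submodule.finrank_mono hple
    rw [finrank_pl hvf hx, hL2] at hmono
    omega

lemma tri_phi {x : Fin v → ZMod 2} : tri v f (phi v f x) = tri v f x := by
  show ({_, _, Submodule.span (ZMod 2) {phi v f (phi v f (phi v f x))}} :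
    Set (Submodule (ZMod 2) (Fin v → ZMod 2))) = _
  rw [phi_phi_phi hvf x]
  ext P
  simp only [tri, Set.mem_insert_iff, Set.mem_singleton_iff]
  tauto

lemma tri_phi2 {x : Fin v → ZMod 2} :
    tri v f (phi v f (phi v f x)) = tri v f x := by
  rw [tri_phi hvf, tri_phi hvf]

lemma pl_phi {x : Fin v → ZMod 2} : pl v f (phi v f x) = pl v f x := by
  show Submodule.span (ZMod 2) {_, _, phi v f (phi v f (phi v f x))} = _
  rw [phi_phi_phi hvf x]
  rw [pl]
  congr 1
  ext z
  simp only [Set.mem_insert_iff, Set.mem_singleton_iff]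
  tauto

lemma pl_phi2 {x : Fin v → ZMod 2} :
    pl v f (phi v f (phi v f x)) = pl v f x := by
  rw [pl_phi hvf, pl_phi hvf]

lemma pl_type1 {x : Fin v → ZMod 2} (hx : Good v f x) :
    IsFixedPlane (Avf v f) (pl v f x) ∧ ¬ PointwiseFixed (Avf v f) (pl v f x) := by
  refine ⟨⟨finrank_pl hvf hx, map_pl hvf⟩, fun h => ?_⟩
  exact hx.2 ((mem_Wsub x).mp ((pointwiseFixed_iff hvf _).mp h (mem_pl_self x)))

/-- surjectivity onto type 1 fixed planes -/
lemma pl_surjective {E : Submodule (ZMod 2) (Fin v → ZMod 2)}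
    (hE : IsFixedPlane (Avf v f) E) (hnp : ¬ PointwiseFixed (Avf v f) E) :
    ∃ x, Good v f x ∧ pl v f x = E := by
  obtain ⟨hE3, hEinv⟩ := hE
  have hnotle : ¬ E ≤ Wsub v f := fun h => hnp ((pointwiseFixed_iff hvf E).mpr h)
  obtain ⟨y0, hy0E, hy0W⟩ := SetLike.not_le_iff_exists.mp hnotle
  have hy0fix : prW v f y0 ≠ y0 := fun h => hy0W ((mem_Wsub y0).mpr h)
  -- there is an element of E with nonzero W-part
  have hcaseB : ∃ z ∈ E, prW v f z ≠ 0 := by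
    by_contra hno
    push_neg at hno
    have hy0U : prW v f y0 = 0 := hno y0 hy0E
    have hy0ne : y0 ≠ 0 := by
      rintro rfl
      exact hy0fix prW_zero
    have key : ∀ h ∈ E, h ≠ (0 : Fin v → ZMod 2) → phi v f h ≠ h := by
      intro h hhE hh0 heq
      have := (phi_fixed_iff hvf h).mp heq
      rw [hno h hhE] at this
      exact hh0 this.symm
    set L := Submodule.span (ZMod 2) {y0, phi v f y0} with hL
    have hLE : L ≤ E := by
      apply span_le.mpr
      rintro z (rfl | rfl)
      exacts [hy0E, phi_mem_of_inv hEinv hy0E]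
    have hL2 : finrank (ZMod 2) L = 2 := finrank_span_pair hvf hy0ne (key y0 hy0E hy0ne)
    have hLne : L ≠ E := by
      intro h
      rw [h, hE3] at hL2
      omega
    obtain ⟨g, hgE, hgL⟩ := SetLike.exists_of_lt (lt_of_le_of_ne hLE hLne)
    have hgne : g ≠ 0 := fun h => hgL (h ▸ zero_mem L)
    set L' := Submodule.span (ZMod 2) {g, phi v f g} with hL'
    have hL'E : L' ≤ E := by
      apply span_le.mpr
      rintro z (rfl | rfl)
      exacts [hgE, phi_mem_of_inv hEinv hgE]
    have hL'2 : finrank (ZMod 2) L' = 2 := finrank_span_pair hvf hgne (key g hgE hgne)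
    have hdim := Submodule.finrank_sup_add_finrank_inf_eq L L'
    have hsup : finrank (ZMod 2) (L ⊔ L' : Submodule (ZMod 2) (Fin v → ZMod 2)) ≤ 3 := by
      have := Submodule.finrank_mono (sup_le hLE hL'E)
      rwa [hE3] at this
    have hinf1 : 1 ≤ finrank (ZMod 2) (L ⊓ L' : Submodule (ZMod 2) (Fin v → ZMod 2)) := by
      omega
    have hinfbot : (L ⊓ L' : Submodule (ZMod 2) (Fin v → ZMod 2)) ≠ ⊥ := by
      intro h
      rw [h, finrank_bot] at hinf1
      omega
    obtain ⟨h, hhM, hh0⟩ := (Submodule.ne_bot_iff _).mp hinfbot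
    obtain ⟨hhL, hhL'⟩ := Submodule.mem_inf.mp hhM
    have hhE : h ∈ E := hLE hhL
    set S := Submodule.span (ZMod 2) {h, phi v f h} with hS
    have hS2 : finrank (ZMod 2) S = 2 := finrank_span_pair hvf hh0 (key h hhE hh0)
    have hSL : S ≤ L := by
      apply span_le.mpr
      rintro z (rfl | rfl)
      exacts [hhL, phi_mem_span_pair hvf hy0U hhL]
    have hSL' : S ≤ L' := by
      apply span_le.mpr
      rintro z (rfl | rfl)
      exacts [hhL', phi_mem_span_pair hvf (hno g hgE) hhL']
    have heqL : S = L := eq_of_le_of_finrank_le hSL (by rw [hL2, hS2])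
    have heqL' : S = L' := eq_of_le_of_finrank_le hSL' (by rw [hL'2, hS2])
    apply hgL
    rw [← heqL, heqL']
    exact subset_span (by simp)
  obtain ⟨z, hzE, hz0⟩ := hcaseB
  have hwE : prW v f z ∈ E := by
    rw [← sum_phi hvf z]
    exact add_mem (add_mem hzE (phi_mem_of_inv hEinv hzE))
      (phi_mem_of_inv hEinv (phi_mem_of_inv hEinv hzE))
  have hwfix : prW v f (prW v f z) = prW v f z := prW_prW _
  -- construct a good element of E
  have hgood : ∃ x, Good v f x ∧ x ∈ E := by
    by_cases hy0w : prW v f y0 = 0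
    · refine ⟨y0 + prW v f z, ⟨?_, ?_⟩, add_mem hy0E hwE⟩
      · rw [prW_add, hy0w, hwfix, zero_add]
        exact hz0
      · rw [prW_add, hy0w, hwfix, zero_add]
        intro h
        have hy0zero : y0 = 0 := by
          funext j
          have := congrFun h j
          simp only [Pi.add_apply] at this
          exact (by decide : ∀ a b : ZMod 2, b = a + b → a = 0) _ _ this
        apply hy0fix
        rw [hy0zero, prW_zero]
    · exact ⟨y0, ⟨hy0w, hy0fix⟩, hy0E⟩
  obtain ⟨x, hxgood, hxE⟩ := hgood
  refine ⟨x, hxgood, ?_⟩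
  have hple : pl v f x ≤ E := by
    rw [pl]
    apply span_le.mpr
    rintro z' hz'
    simp only [Set.mem_insert_iff, Set.mem_singleton_iff] at hz'
    rcases hz' with rfl | rfl | rfl
    exacts [hxE, phi_mem_of_inv hEinv hxE, phi_mem_of_inv hEinv (phi_mem_of_inv hEinv hxE)]
  exact eq_of_le_of_finrank_le hple (by rw [hE3, finrank_pl hvf hxgood])

/-- surjectivity onto orbit triangles -/
lemma tri_surjective {O : Set (Submodule (ZMod 2) (Fin v → ZMod 2))}
    (hO : IsOrbitTriangle v f O) : ∃ x, Good v f x ∧ tri v f x = O := by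
  obtain ⟨⟨P, hP1, hOP, hcard⟩, hnoL⟩ := hO
  obtain ⟨y, hy0, rfl⟩ := point_exists hP1
  rw [mapMat_span_singleton, mapMat_span_singleton] at hOP
  have hyfix : prW v f y ≠ y := by
    intro h
    have hfix : phi v f y = y := (phi_fixed_iff hvf y).mpr h
    rw [hOP] at hcard
    rw [hfix] at hcard
    rw [hfix] at hcard
    simp at hcard
  have hyU : prW v f y ≠ 0 := by
    intro hU
    apply hnoL
    refine ⟨Submodule.span (ZMod 2) {y, phi v f y},
      finrank_span_pair hvf hy0 (fun h => hyfix ((phi_fixed_iff hvf y).mp h)), ?_⟩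
    intro Q hQ
    rw [hOP] at hQ
    rcases hQ with rfl | rfl | rfl
    · exact (span_singleton_le_iff_mem _ _).mpr (subset_span (by simp))
    · exact (span_singleton_le_iff_mem _ _).mpr (subset_span (by simp))
    · rw [phi2_eq_add hvf hU]
      exact (span_singleton_le_iff_mem _ _).mpr
        (add_mem (subset_span (by simp)) (subset_span (by simp)))
  exact ⟨y, ⟨hyU, hyfix⟩, hOP.symm⟩

end

open Module Submodule

section
variable {v f : ℕ} (hvf : Even (v - f))
include hvf

lemma count_type1 (hfv : f ≤ v) :
    Nat.card {E : Submodule (ZMod 2) (Fin v → ZMod 2) |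
        IsFixedPlane (Avf v f) E ∧ ¬ PointwiseFixed (Avf v f) E}
      = (2 ^ f - 1) * (2 ^ (v - f) - 1) / 3 := by
  classical
  set T := {E : Submodule (ZMod 2) (Fin v → ZMod 2) |
      IsFixedPlane (Avf v f) E ∧ ¬ PointwiseFixed (Avf v f) E} with hT
  have hpmem : ∀ x : {x : Fin v → ZMod 2 // Good v f x}, pl v f x.1 ∈ T := by
    intro x
    exact (pl_type1 hvf x.2)
  set p : {x : Fin v → ZMod 2 // Good v f x} → T := fun x => ⟨pl v f x.1, hpmem x⟩ with hp
  have hfib : ∀ t : T, Nat.card {s // p s = t} = 3 := by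
    intro t
    have ht := t.2
    simp only [hT, Set.mem_setOf_eq] at ht
    obtain ⟨x0, hx0, hpl0⟩ := pl_surjective hvf ht.1 ht.2
    have e : {s // p s = t} ≃
        ({x0, phi v f x0, phi v f (phi v f x0)} : Set (Fin v → ZMod 2)) := by
      refine ⟨fun s => ⟨s.1.1, ?_⟩, fun y => ⟨⟨y.1, ?_⟩, ?_⟩, ?_, ?_⟩
      · have hpe : pl v f s.1.1 = pl v f x0 := by
          have := congrArg Subtype.val s.2
          simp only [hp] at this
          rw [this, hpl0]
        have hmem : s.1.1 ∈ pl v f x0 := hpe ▸ mem_pl_self s.1.1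
        rcases mem_pl_good hvf hx0 s.1.2 hmem with h | h | h <;>
          simp only [Set.mem_insert_iff, Set.mem_singleton_iff] <;> tauto
      · rcases y.2 with h | h | h <;> rw [show y.1 = _ from h]
        · exact hx0
        · exact good_phi hvf hx0
        · exact good_phi2 hvf hx0
      · apply Subtype.ext
        show pl v f y.1 = t.1
        rcases y.2 with h | h | h <;> rw [show y.1 = _ from h]
        · exact hpl0
        · rw [pl_phi hvf]; exact hpl0
        · rw [pl_phi2 hvf]; exact hpl0
      · intro s
        apply Subtype.ext
        apply Subtype.ext
        rfl
      · intro y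
        apply Subtype.ext
        rfl
    rw [Nat.card_congr e, Nat.card_coe_set_eq]
    exact Set.ncard_eq_three.mpr ⟨x0, phi v f x0, phi v f (phi v f x0),
      (good_phi_ne_self hvf hx0).symm, (good_phi2_ne_self hvf hx0).symm,
      (good_phi2_ne_phi hvf hx0).symm, rfl⟩
  have hcount := card_eq_mul_of_fibers p 3 hfib
  rw [card_good hfv] at hcount
  have hm : (2 ^ f - 1) * (2 ^ (v - f) - 1) = Nat.card T * 3 := by
    rw [mul_comm ((2:ℕ) ^ f - 1), hcount, mul_comm]
  exact (Nat.div_eq_of_eq_mul_left (by norm_num) hm).symm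

lemma count_triangles (hfv : f ≤ v) :
    Nat.card {O : Set (Submodule (ZMod 2) (Fin v → ZMod 2)) | IsOrbitTriangle v f O}
      = (2 ^ f - 1) * (2 ^ (v - f) - 1) / 3 := by
  classical
  set T := {O : Set (Submodule (ZMod 2) (Fin v → ZMod 2)) | IsOrbitTriangle v f O} with hT
  have hpmem : ∀ x : {x : Fin v → ZMod 2 // Good v f x}, tri v f x.1 ∈ T := by
    intro x
    exact tri_isOrbitTriangle hvf x.2
  set p : {x : Fin v → ZMod 2 // Good v f x} → T := fun x => ⟨tri v f x.1, hpmem x⟩ with hp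
  have hfib : ∀ t : T, Nat.card {s // p s = t} = 3 := by
    intro t
    have ht := t.2
    simp only [hT, Set.mem_setOf_eq] at ht
    obtain ⟨x0, hx0, htri0⟩ := tri_surjective hvf ht
    have e : {s // p s = t} ≃
        ({x0, phi v f x0, phi v f (phi v f x0)} : Set (Fin v → ZMod 2)) := by
      refine ⟨fun s => ⟨s.1.1, ?_⟩, fun y => ⟨⟨y.1, ?_⟩, ?_⟩, ?_, ?_⟩
      · have hpe : tri v f s.1.1 = tri v f x0 := by
          have := congrArg Subtype.val s.2
          simp only [hp] at this
          rw [this, htri0]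
        have hmem : Submodule.span (ZMod 2) {s.1.1} ∈ tri v f x0 :=
          hpe ▸ (Or.inl rfl : Submodule.span (ZMod 2) {s.1.1} ∈ tri v f s.1.1)
        have hs0 : s.1.1 ≠ 0 := good_ne_zero hvf s.1.2
        rcases hmem with h | h | h
        · exact Or.inl (span_singleton_inj hs0 h)
        · exact Or.inr (Or.inl (span_singleton_inj hs0 h))
        · exact Or.inr (Or.inr (span_singleton_inj hs0 h))
      · rcases y.2 with h | h | h <;> rw [show y.1 = _ from h]
        · exact hx0
        · exact good_phi hvf hx0
        · exact good_phi2 hvf hx0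
      · apply Subtype.ext
        show tri v f y.1 = t.1
        rcases y.2 with h | h | h <;> rw [show y.1 = _ from h]
        · exact htri0
        · rw [tri_phi hvf]; exact htri0
        · rw [tri_phi2 hvf]; exact htri0
      · intro s
        apply Subtype.ext
        apply Subtype.ext
        rfl
      · intro y
        apply Subtype.ext
        rfl
    rw [Nat.card_congr e, Nat.card_coe_set_eq]
    exact Set.ncard_eq_three.mpr ⟨x0, phi v f x0, phi v f (phi v f x0),
      (good_phi_ne_self hvf hx0).symm, (good_phi2_ne_self hvf hx0).symm,
      (good_phi2_ne_phi hvf hx0).symm, rfl⟩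
  have hcount := card_eq_mul_of_fibers p 3 hfib
  rw [card_good hfv] at hcount
  have hm : (2 ^ f - 1) * (2 ^ (v - f) - 1) = Nat.card T * 3 := by
    rw [mul_comm ((2:ℕ) ^ f - 1), hcount, mul_comm]
  exact (Nat.div_eq_of_eq_mul_left (by norm_num) hm).symm

end


/-- Under the action of `⟨A_{v,f}⟩`, the number of fixed planes of type 7 equals the
Gaussian binomial coefficient `[f choose 3]_2 = (2^f-1)(2^{f-1}-1)(2^{f-2}-1)/21`,
and the number of fixed planes of type 1 equals `(2^f-1)(2^{v-f}-1)/3`, which is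
also the number of orbit triangles. -/
theorem stmt5 (v f : ℕ) (hf : f ≤ v - 1) (hvf : Even (v - f)) :
    Nat.card {E : Submodule (ZMod 2) (Fin v → ZMod 2) |
        IsFixedPlane (Avf v f) E ∧ PointwiseFixed (Avf v f) E}
      = (2 ^ f - 1) * (2 ^ (f - 1) - 1) * (2 ^ (f - 2) - 1) / 21 ∧
    Nat.card {E : Submodule (ZMod 2) (Fin v → ZMod 2) |
        IsFixedPlane (Avf v f) E ∧ ¬ PointwiseFixed (Avf v f) E}
      = (2 ^ f - 1) * (2 ^ (v - f) - 1) / 3 ∧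
    Nat.card {O : Set (Submodule (ZMod 2) (Fin v → ZMod 2)) | IsOrbitTriangle v f O}
      = (2 ^ f - 1) * (2 ^ (v - f) - 1) / 3 := by
  have hfv : f ≤ v := le_trans hf (Nat.sub_le v 1)
  exact ⟨count_type7 hfv hvf, count_type1 hvf hfv, count_triangles hvf hfv⟩
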